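/- MMAP decomposition: let Q, E, and M = Λ∖(Q∪E) partition the variables, and suppose the tensor set 𝒯 is partitioned into blocks S₁,…,S_r such that for every variable v ∈ M, all tensors whose scope contains v lie in a single block. Then max over q ∈ dom(Q) of Σ_{m ∈ dom(M)} Π_{T∈𝒯} T(q, m, e) equals max over q of Π_i Sᵢ'(q restricted to Λᵢ ∩ Q), where Sᵢ' = con(Λᵢ, (Sᵢ)_e, Λᵢ ∩ Q) and Λᵢ is the variable set of block Sᵢ. -/

import Mathlib

/-!
STATEMENT 14: MMAP decomposition.  With variables partitioned into query Q, evidence E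
and marginalized M = Λ∖(Q∪E), and the tensor set partitioned into blocks S₁,…,S_r
(with variable sets Λᵢ) such that every variable v ∈ M occurs in the variable set of at
most one block (and of at least one),
  max_q Σ_m Π_{T∈𝒯} T(q, m, e) = max_q Π_i Sᵢ'(q|_{Λᵢ∩Q}),
where Sᵢ' = con(Λᵢ∖E, (Sᵢ)_e, Λᵢ∩Q).
-/

variable {ι : Type} [Fintype ι] [DecidableEq ι]
variable {D : ι → Type} [∀ i, Fintype (D i)] [∀ i, DecidableEq (D i)]

/-- Tensor network contraction `con(Λ, 𝒯, V₀)` over the variable set `Λ`. -/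
noncomputable def con (Λ : Finset ι) (𝒯 : List ((∀ i, D i) → ℝ)) (V₀ : Finset ι)
    (x : ∀ i, D i) : ℝ :=
  ∑ y : ∀ i, D i,
    if ∀ i, i ∉ Λ \ V₀ → y i = x i then (𝒯.map fun T => T y).prod else 0

/-- Slicing a tensor at the evidence `E = e`. -/
def sliceAt (E : Finset ι) (e : ∀ i, D i) (T : (∀ i, D i) → ℝ) : (∀ i, D i) → ℝ :=
  fun y => T fun i => if i ∈ E then e i else y i

/-- A tensor `T` has scope (at most) `S` if it depends only on the coordinates in `S`. -/
def TensorDependsOn (T : (∀ i, D i) → ℝ) (S : Finset ι) : Prop :=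
  ∀ x y : ∀ i, D i, (∀ i ∈ S, x i = y i) → T x = T y

/-- Auxiliary: sum of `f` over all `y` agreeing with `x` outside `A`. -/
noncomputable def Ssum (A : Finset ι) (f : (∀ i, D i) → ℝ) (x : ∀ i, D i) : ℝ :=
  ∑ y : ∀ i, D i, if ∀ i, i ∉ A → y i = x i then f y else 0

lemma con_eq_Ssum (Λ : Finset ι) (𝒯 : List ((∀ i, D i) → ℝ)) (V₀ : Finset ι)
    (x : ∀ i, D i) :
    con Λ 𝒯 V₀ x = Ssum (Λ \ V₀) (fun y => (𝒯.map fun T => T y).prod) x := rfl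

lemma Ssum_empty (f : (∀ i, D i) → ℝ) (x : ∀ i, D i) : Ssum ∅ f x = f x := by
  unfold Ssum
  rw [Finset.sum_eq_single x]
  · simp
  · intro y _ hyx
    rw [if_neg]
    intro h
    exact hyx (funext fun i => h i (by simp))
  · simp

lemma TensorDependsOn.mono {T : (∀ i, D i) → ℝ} {s t : Finset ι} (h : TensorDependsOn T s)
    (hst : s ⊆ t) : TensorDependsOn T t :=
  fun x y hxy => h x y fun i hi => hxy i (hst hi)

lemma TensorDependsOn.sliceAt' {T : (∀ i, D i) → ℝ} {s : Finset ι} (h : TensorDependsOn T s)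
    (E : Finset ι) (e : ∀ i, D i) : TensorDependsOn (sliceAt E e T) (s \ E) := by
  intro x y hxy
  unfold sliceAt
  refine h _ _ fun i hi => ?_
  by_cases hiE : i ∈ E
  · simp [hiE]
  · simp only [hiE, if_false]
    exact hxy i (Finset.mem_sdiff.2 ⟨hi, hiE⟩)

lemma dependsOn_prod {L : List ((∀ i, D i) → ℝ)} {s : Finset ι}
    (h : ∀ T ∈ L, TensorDependsOn T s) :
    TensorDependsOn (fun y => (L.map fun T => T y).prod) s := by
  induction L with
  | nil => intro x y _; simp
  | cons T L ih =>
    intro x y hxy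
    simp only [List.map_cons, List.prod_cons]
    rw [h T (by simp) x y hxy]
    exact congrArg (fun r => T y * r) (ih (fun T' hT' => h T' (by simp [hT'])) x y hxy)

lemma Ssum_split (A B : Finset ι) (hAB : Disjoint A B) (f g h : (∀ i, D i) → ℝ)
    (hf : ∀ y, f y = g y * h y) (hg : TensorDependsOn g Bᶜ) (hh : TensorDependsOn h Aᶜ)
    (x : ∀ i, D i) :
    Ssum (A ∪ B) f x = Ssum A g x * Ssum B h x := by
  classical
  unfold Ssum
  rw [← Finset.sum_filter, ← Finset.sum_filter, ← Finset.sum_filter,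
    Finset.sum_mul_sum, ← Finset.sum_product']
  refine Finset.sum_nbij'
    (i := fun y => ((fun i => if i ∈ A then y i else x i),
      (fun i => if i ∈ B then y i else x i)))
    (j := fun p => (fun i => if i ∈ A then p.1 i else p.2 i)) ?_ ?_ ?_ ?_ ?_
  · intro y hy
    simp only [Finset.mem_filter, Finset.mem_univ, true_and] at hy ⊢
    rw [Finset.mem_product]
    constructor
    · simp only [Finset.mem_filter, Finset.mem_univ, true_and]
      intro i hi
      simp [hi]
    · simp only [Finset.mem_filter, Finset.mem_univ, true_and]
      intro i hi
      simp [hi]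
  · intro p hp
    rw [Finset.mem_product] at hp
    simp only [Finset.mem_filter, Finset.mem_univ, true_and] at hp ⊢
    intro i hi
    rw [Finset.mem_union] at hi
    push_neg at hi
    simp [hi.1, hp.2 i hi.2]
  · intro y hy
    simp only [Finset.mem_filter, Finset.mem_univ, true_and] at hy
    funext i
    by_cases hiA : i ∈ A
    · simp [hiA]
    · by_cases hiB : i ∈ B
      · simp [hiA, hiB]
      · simp only [hiA, hiB, if_false]
        exact (hy i (by simp [hiA, hiB])).symm
  · intro p hp
    rw [Finset.mem_product] at hp
    simp only [Finset.mem_filter, Finset.mem_univ, true_and] at hp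
    ext i
    · by_cases hiA : i ∈ A
      · simp [hiA]
      · simp [hiA, hp.1 i hiA]
    · by_cases hiB : i ∈ B
      · have hiA : i ∉ A := fun h' => (Finset.disjoint_left.1 hAB h') hiB
        simp [hiA, hiB]
      · simp only [hiB, if_false]
        exact (hp.2 i hiB).symm
  · intro y hy
    simp only [Finset.mem_filter, Finset.mem_univ, true_and] at hy
    rw [hf y]
    congr 1
    · refine hg y _ fun i hi => ?_
      rw [Finset.mem_compl] at hi
      by_cases hiA : i ∈ A
      · simp [hiA]
      · simp [hiA, hy i (by simp [hiA, hi])]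
    · refine hh y _ fun i hi => ?_
      rw [Finset.mem_compl] at hi
      by_cases hiB : i ∈ B
      · simp [hiB]
      · simp [hiB, hy i (by simp [hi, hiB])]

lemma mem_foldrUnion {u : Finset ι} {l : List (Finset ι × List ((∀ i, D i) → ℝ))}
    {a : ι} :
    a ∈ l.foldr (fun P s => (u ∩ P.1) ∪ s) ∅ ↔ ∃ P ∈ l, a ∈ u ∩ P.1 := by
  induction l with
  | nil => simp
  | cons P l ih => simp [ih]

lemma factor (Q E : Finset ι) (e : ∀ i, D i)
    (𝒮 : List (Finset ι × List ((∀ i, D i) → ℝ))) :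
    (∀ P ∈ 𝒮, ∀ T ∈ P.2, TensorDependsOn T P.1) →
    List.Pairwise (fun P P' =>
      Disjoint (((Finset.univ \ E) \ Q) ∩ P.1) (((Finset.univ \ E) \ Q) ∩ P'.1)) 𝒮 →
    ∀ x, Ssum (𝒮.foldr (fun P s => (((Finset.univ \ E) \ Q) ∩ P.1) ∪ s) ∅)
        (fun y => ((((𝒮.map Prod.snd).flatten).map (sliceAt E e)).map fun T => T y).prod) x
      = (𝒮.map fun P => con (P.1 \ E) (P.2.map (sliceAt E e)) (P.1 ∩ Q) x).prod := by
  induction 𝒮 with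
  | nil => intro _ _ x; simp [Ssum_empty]
  | cons P rest ih =>
    intro hdep hpw x
    obtain ⟨hPrest, hpw'⟩ := List.pairwise_cons.1 hpw
    set M : Finset ι := (Finset.univ \ E) \ Q with hMdef
    set B : Finset ι := rest.foldr (fun P s => (M ∩ P.1) ∪ s) ∅ with hBdef
    have hAB : Disjoint (M ∩ P.1) B := by
      rw [Finset.disjoint_left]
      intro a haA haB
      obtain ⟨P', hP', ha'⟩ := mem_foldrUnion.1 haB
      exact Finset.disjoint_left.1 (hPrest P' hP') haA ha'
    have hsplit := Ssum_split (M ∩ P.1) B hAB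
      (fun y => (((((P :: rest).map Prod.snd).flatten).map (sliceAt E e)).map fun T => T y).prod)
      (fun y => (((P.2).map (sliceAt E e)).map fun T => T y).prod)
      (fun y => ((((rest.map Prod.snd).flatten).map (sliceAt E e)).map fun T => T y).prod)
      (by intro y; simp [List.prod_append])
      (by
        refine dependsOn_prod fun T' hT' => ?_
        simp only [List.mem_map] at hT'
        obtain ⟨T, hT, rfl⟩ := hT'
        refine ((hdep P (by simp) T hT).sliceAt' E e).mono ?_
        intro v hv
        rw [Finset.mem_compl]
        intro hvB
        obtain ⟨P', hP', hv'⟩ := mem_foldrUnion.1 hvB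
        have hvM : v ∈ M := (Finset.mem_inter.1 hv').1
        have hvP : v ∈ P.1 := (Finset.mem_sdiff.1 hv).1
        exact Finset.disjoint_left.1 (hPrest P' hP') (Finset.mem_inter.2 ⟨hvM, hvP⟩) hv')
      (by
        refine dependsOn_prod fun T' hT' => ?_
        simp only [List.mem_map] at hT'
        obtain ⟨T, hT, rfl⟩ := hT'
        rw [List.mem_flatten] at hT
        obtain ⟨L, hL, hTL⟩ := hT
        rw [List.mem_map] at hL
        obtain ⟨P', hP', rfl⟩ := hL
        refine ((hdep P' (by simp [hP']) T hTL).sliceAt' E e).mono ?_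
        intro v hv
        rw [Finset.mem_compl]
        intro hvA
        have hvM : v ∈ M := (Finset.mem_inter.1 hvA).1
        have hvP' : v ∈ P'.1 := (Finset.mem_sdiff.1 hv).1
        exact Finset.disjoint_left.1 (hPrest P' hP') hvA
          (Finset.mem_inter.2 ⟨hvM, hvP'⟩))
      x
    have hfold : (P :: rest).foldr (fun P s => (M ∩ P.1) ∪ s) ∅ = (M ∩ P.1) ∪ B := rfl
    rw [hfold, hsplit, ih (fun P' hP' => hdep P' (by simp [hP'])) hpw' x]
    have hsetA : (M ∩ P.1) = (P.1 \ E) \ (P.1 ∩ Q) := by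
      ext v
      simp only [hMdef, Finset.mem_inter, Finset.mem_sdiff, Finset.mem_univ, true_and,
        Finset.mem_inter]
      tauto
    rw [List.map_cons, List.prod_cons, con_eq_Ssum, ← hsetA]

/-- MMAP decomposition: the MMAP objective `max_q Σ_m Π_{T∈𝒯} T(q,m,e)` equals
`max_q Π_i Sᵢ'(q|_{Λᵢ∩Q})` with `Sᵢ' = con(Λᵢ∖E, (Sᵢ)_e, Λᵢ∩Q)`, where the blocks
`𝒮` pair each variable set `Λᵢ` with its list of tensors. -/
theorem mmap_decomposition [Nonempty (∀ i, D i)] (Q E : Finset ι)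
    (hQE : Disjoint Q E) (e : ∀ i, D i)
    (𝒮 : List (Finset ι × List ((∀ i, D i) → ℝ)))
    (hdep : ∀ P ∈ 𝒮, ∀ T ∈ P.2, TensorDependsOn T P.1)
    (hnn : ∀ P ∈ 𝒮, ∀ T ∈ P.2, ∀ y, 0 ≤ T y)
    (hcover : ∀ v : ι, v ∉ Q → v ∉ E → ∃ P ∈ 𝒮, v ∈ P.1)
    (huniq : ∀ v : ι, v ∉ Q → v ∉ E →
      ∀ i j : Fin 𝒮.length, v ∈ (𝒮.get i).1 → v ∈ (𝒮.get j).1 → i = j) :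
    (Finset.univ : Finset (∀ i, D i)).sup' Finset.univ_nonempty
        (fun x => con (Finset.univ \ E)
          (((𝒮.map Prod.snd).flatten).map (sliceAt E e)) Q x) =
      (Finset.univ : Finset (∀ i, D i)).sup' Finset.univ_nonempty
        (fun x =>
          (𝒮.map fun P => con (P.1 \ E) (P.2.map (sliceAt E e)) (P.1 ∩ Q) x).prod) := by
  apply Finset.sup'_congr _ rfl
  intro x _
  have hpw : List.Pairwise (fun P P' =>
      Disjoint (((Finset.univ \ E) \ Q) ∩ P.1) (((Finset.univ \ E) \ Q) ∩ P'.1)) 𝒮 := by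
    rw [List.pairwise_iff_get]
    intro i j hij
    rw [Finset.disjoint_left]
    intro v hv1 hv2
    have hvM := (Finset.mem_inter.1 hv1).1
    simp only [Finset.mem_sdiff, Finset.mem_univ, true_and] at hvM
    exact absurd (huniq v hvM.2 hvM.1 i j (Finset.mem_inter.1 hv1).2
      (Finset.mem_inter.1 hv2).2) (ne_of_lt hij)
  have hset : (Finset.univ \ E) \ Q =
      𝒮.foldr (fun P s => (((Finset.univ \ E) \ Q) ∩ P.1) ∪ s) ∅ := by
    ext v
    rw [mem_foldrUnion]
    constructor
    · intro hv
      have hv' := hv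
      simp only [Finset.mem_sdiff, Finset.mem_univ, true_and] at hv'
      obtain ⟨P, hP, hvP⟩ := hcover v hv'.2 hv'.1
      exact ⟨P, hP, Finset.mem_inter.2 ⟨hv, hvP⟩⟩
    · rintro ⟨P, _, hv⟩
      exact (Finset.mem_inter.1 hv).1
  rw [con_eq_Ssum, hset]
  exact factor Q E e 𝒮 hdep hpw x
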